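/- arXiv:1609.05136 — 3 statements merged into one kernel-verified Lean document; each statement's English description precedes it below -/
import Mathlib

section
/- Let μ be a finite nonnegative measure on [0,1] bounded by M > 0 (i.e., μ([0,1]) ≤ M), absolutely continuous with respect to Lebesgue measure with density bounded by M. If x, x' ∈ C^n satisfy ‖x - x'‖_∞ ≤ τ, and O_+(x), O_+(x') denote the unions of the intervals of the corresponding partitions of [0,1] whose associated coordinates have positive sign, then |μ(O_+(x)) - μ(O_+(x'))| ≤ (n+1)^2 · M · τ. -/
open MeasureTheory

/-- Cut points: `cutPt x k = Σ_{i < k} |x i|`. -/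
noncomputable def cutPt {n : ℕ} (x : Fin (n + 1) → ℝ) (k : ℕ) : ℝ :=
  ∑ i : Fin (n + 1), if (i : ℕ) < k then |x i| else 0

/-- The positive portion of the partition of `[0,1]` encoded by `x`:
the union of the intervals `[t_{k-1}, t_k]` whose coordinate `x k` is nonnegative. -/
noncomputable def Opos {n : ℕ} (x : Fin (n + 1) → ℝ) : Set ℝ :=
  ⋃ k : Fin (n + 1), if 0 ≤ x k then Set.Icc (cutPt x (k : ℕ)) (cutPt x ((k : ℕ) + 1)) else ∅


lemma cutPt_nonneg {n : ℕ} (x : Fin (n + 1) → ℝ) (k : ℕ) : 0 ≤ cutPt x k :=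
  Finset.sum_nonneg fun i _ => by positivity

lemma cutPt_mono {n : ℕ} (x : Fin (n + 1) → ℝ) {k l : ℕ} (h : k ≤ l) :
    cutPt x k ≤ cutPt x l := by
  apply Finset.sum_le_sum
  intro i _
  by_cases hi : (i : ℕ) < k
  · simp [hi, hi.trans_le h]
  · simp only [hi, if_false]
    positivity

lemma cutPt_le_one {n : ℕ} (x : Fin (n + 1) → ℝ) (hx : ∑ i, |x i| = 1) (k : ℕ) :
    cutPt x k ≤ 1 := by
  rw [← hx]
  apply Finset.sum_le_sum
  intro i _
  by_cases hi : (i : ℕ) < k <;> simp [hi, abs_nonneg]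

lemma cutPt_succ_sub {n : ℕ} (x : Fin (n + 1) → ℝ) (k : Fin (n + 1)) :
    cutPt x ((k : ℕ) + 1) - cutPt x (k : ℕ) = |x k| := by
  unfold cutPt
  rw [← Finset.sum_sub_distrib]
  rw [Finset.sum_eq_single k]
  · have : (k : ℕ) < (k : ℕ) + 1 := Nat.lt_succ_self _
    simp [this, Nat.lt_irrefl]
  · intro i _ hik
    by_cases hi : (i : ℕ) < (k : ℕ)
    · simp [hi, hi.trans (Nat.lt_succ_self _)]
    · have : ¬ (i : ℕ) < (k : ℕ) + 1 := by
        intro h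
        exact hik (Fin.ext (Nat.le_antisymm (Nat.lt_succ_iff.mp h) (Nat.le_of_not_lt hi)))
      simp [hi, this]
  · simp

lemma cutPt_close {n : ℕ} (x x' : Fin (n + 1) → ℝ) (τ : ℝ) (hτ : 0 ≤ τ)
    (hclose : ∀ i, |x i - x' i| ≤ τ) (k : ℕ) :
    |cutPt x k - cutPt x' k| ≤ (k : ℝ) * τ := by
  unfold cutPt
  rw [← Finset.sum_sub_distrib]
  calc |∑ i : Fin (n+1), ((if (i:ℕ) < k then |x i| else 0) - (if (i:ℕ) < k then |x' i| else 0))|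
      ≤ ∑ i : Fin (n+1), |(if (i:ℕ) < k then |x i| else 0) - (if (i:ℕ) < k then |x' i| else 0)| :=
        Finset.abs_sum_le_sum_abs _ _
    _ ≤ ∑ i : Fin (n+1), (if (i:ℕ) < k then τ else 0) := by
        apply Finset.sum_le_sum
        intro i _
        by_cases hi : (i:ℕ) < k
        · simp only [hi, if_true]
          exact (abs_abs_sub_abs_le_abs_sub (x i) (x' i)).trans (hclose i)
        · simp [hi]
    _ = ((Finset.univ.filter fun i : Fin (n+1) => (i:ℕ) < k).card : ℝ) * τ := by
        rw [Finset.sum_ite, Finset.sum_const, Finset.sum_const_zero, add_zero, nsmul_eq_mul]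
    _ ≤ (k : ℝ) * τ := by
        apply mul_le_mul_of_nonneg_right _ hτ
        norm_cast
        calc (Finset.univ.filter fun i : Fin (n+1) => (i:ℕ) < k).card
            ≤ ((Finset.range k).card) := by
              apply Finset.card_le_card_of_injOn (fun i : Fin (n+1) => (i : ℕ))
              · intro i hi; simp at hi ⊢; exact hi
              · intro a _ b _ h; exact Fin.ext h
          _ = k := Finset.card_range k

lemma vol_Icc_diff (a b a' b' : ℝ) :
    volume (Set.Icc a b \ Set.Icc a' b') ≤ ENNReal.ofReal (|a - a'| + |b - b'|) := by
  have hsub : Set.Icc a b \ Set.Icc a' b' ⊆ Set.Icc (min a a') a' ∪ Set.Icc b' (max b b') := by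
    rintro y ⟨⟨hy1, hy2⟩, hy3⟩
    rw [Set.mem_Icc, not_and_or, not_le, not_le] at hy3
    rcases hy3 with h | h
    · left; exact ⟨le_trans (min_le_left _ _) hy1, h.le⟩
    · right; exact ⟨h.le, le_trans hy2 (le_max_left _ _)⟩
  calc volume (Set.Icc a b \ Set.Icc a' b')
      ≤ volume (Set.Icc (min a a') a') + volume (Set.Icc b' (max b b')) :=
        le_trans (measure_mono hsub) (measure_union_le _ _)
    _ = ENNReal.ofReal (a' - min a a') + ENNReal.ofReal (max b b' - b') := by
        rw [Real.volume_Icc, Real.volume_Icc]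
    _ ≤ ENNReal.ofReal |a - a'| + ENNReal.ofReal |b - b'| := by
        gcongr
        · rcases le_total a a' with h | h
          · rw [min_eq_left h, abs_sub_comm, abs_of_nonneg (by linarith)]
          · rw [min_eq_right h]; simp [abs_nonneg]
        · rcases le_total b b' with h | h
          · rw [max_eq_right h]; simp [abs_nonneg]
          · rw [max_eq_left h, abs_of_nonneg (by linarith)]
    _ = ENNReal.ofReal (|a - a'| + |b - b'|) :=
        (ENNReal.ofReal_add (abs_nonneg _) (abs_nonneg _)).symm


lemma sum_odd (n : ℕ) : ∑ k : Fin (n+1), (2*(k:ℝ)+1) = ((n:ℝ)+1)^2 := by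
  rw [Fin.sum_univ_eq_sum_range (fun k => 2*(k:ℝ)+1)]
  induction n with
  | zero => simp
  | succ m ih => rw [Finset.sum_range_succ, ih]; push_cast; ring

lemma mu_diff_le (n : ℕ) (M τ : ℝ) (hM : 0 < M) (hτ : 0 ≤ τ) (μ : Measure ℝ)
    (hdensity : ∀ s : Set ℝ, MeasurableSet s → μ s ≤ ENNReal.ofReal M * volume s)
    (x x' : Fin (n + 1) → ℝ)
    (hclose : ∀ i, |x i - x' i| ≤ τ) :
    μ (Opos x \ Opos x') ≤ ENNReal.ofReal (((n:ℝ)+1)^2 * M * τ) := by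
  have hsub : Opos x \ Opos x' ⊆
      ⋃ k : Fin (n+1),
        ((if 0 ≤ x k then Set.Icc (cutPt x (k : ℕ)) (cutPt x ((k : ℕ) + 1)) else ∅) \
         (if 0 ≤ x' k then Set.Icc (cutPt x' (k : ℕ)) (cutPt x' ((k : ℕ) + 1)) else ∅)) := by
    rw [Opos, Set.iUnion_diff]
    apply Set.iUnion_mono
    intro k
    exact Set.diff_subset_diff_right (Set.subset_iUnion
      (fun k : Fin (n+1) => if 0 ≤ x' k then Set.Icc (cutPt x' (k : ℕ)) (cutPt x' ((k : ℕ) + 1)) else ∅) k)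
  have hperk : ∀ k : Fin (n+1),
      μ ((if 0 ≤ x k then Set.Icc (cutPt x (k : ℕ)) (cutPt x ((k : ℕ) + 1)) else ∅) \
         (if 0 ≤ x' k then Set.Icc (cutPt x' (k : ℕ)) (cutPt x' ((k : ℕ) + 1)) else ∅))
        ≤ ENNReal.ofReal (M * ((2*(k:ℝ)+1) * τ)) := by
    intro k
    have hmeas : MeasurableSet
        ((if 0 ≤ x k then Set.Icc (cutPt x (k : ℕ)) (cutPt x ((k : ℕ) + 1)) else ∅) \
         (if 0 ≤ x' k then Set.Icc (cutPt x' (k : ℕ)) (cutPt x' ((k : ℕ) + 1)) else ∅)) := by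
      apply MeasurableSet.diff <;> split <;> first | exact measurableSet_Icc | exact MeasurableSet.empty
    have hvol : volume
        ((if 0 ≤ x k then Set.Icc (cutPt x (k : ℕ)) (cutPt x ((k : ℕ) + 1)) else ∅) \
         (if 0 ≤ x' k then Set.Icc (cutPt x' (k : ℕ)) (cutPt x' ((k : ℕ) + 1)) else ∅))
        ≤ ENNReal.ofReal ((2*(k:ℝ)+1) * τ) := by
      by_cases h1 : 0 ≤ x k
      · by_cases h2 : 0 ≤ x' k
        · simp only [h1, h2, if_true]
          refine le_trans (vol_Icc_diff _ _ _ _) (ENNReal.ofReal_le_ofReal ?_)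
          have c1 := cutPt_close x x' τ hτ hclose (k : ℕ)
          have c2 := cutPt_close x x' τ hτ hclose ((k : ℕ) + 1)
          push_cast at c2 ⊢
          linarith
        · simp only [h1, h2, if_true, if_false, Set.diff_empty, Real.volume_Icc]
          apply ENNReal.ofReal_le_ofReal
          rw [cutPt_succ_sub x k]
          have : |x k| ≤ τ := by
            have := hclose k
            rw [abs_of_nonneg h1]
            rw [abs_le] at this
            push_neg at h2
            linarith [this.2]
          nlinarith [Nat.cast_nonneg (α := ℝ) (k : ℕ)]
      · simp [h1]
    calc μ _ ≤ ENNReal.ofReal M * volume _ := hdensity _ hmeas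
      _ ≤ ENNReal.ofReal M * ENNReal.ofReal ((2*(k:ℝ)+1) * τ) := by gcongr
      _ = ENNReal.ofReal (M * ((2*(k:ℝ)+1) * τ)) := (ENNReal.ofReal_mul hM.le).symm
  calc μ (Opos x \ Opos x') ≤ μ (⋃ k : Fin (n+1), _) := measure_mono hsub
    _ ≤ ∑ k : Fin (n+1), μ _ := measure_iUnion_fintype_le μ _
    _ ≤ ∑ k : Fin (n+1), ENNReal.ofReal (M * ((2*(k:ℝ)+1) * τ)) := Finset.sum_le_sum fun k _ => hperk k
    _ = ENNReal.ofReal (∑ k : Fin (n+1), M * ((2*(k:ℝ)+1) * τ)) := by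
        rw [ENNReal.ofReal_sum_of_nonneg]
        intro k _
        have : (0:ℝ) ≤ 2*(k:ℝ)+1 := by positivity
        positivity
    _ = ENNReal.ofReal (((n:ℝ)+1)^2 * M * τ) := by
        congr 1
        have : ∀ k : Fin (n+1), M * ((2*(k:ℝ)+1) * τ) = (2*(k:ℝ)+1) * (M * τ) := fun k => by ring
        rw [Finset.sum_congr rfl fun k _ => this k, ← Finset.sum_mul, sum_odd]
        ring


/-- Lipschitz-type continuity of the value of the positive portion: if `μ` is a finite
nonnegative measure on `[0,1]` bounded by `M`, absolutely continuous with density bounded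
by `M`, and `x, x' ∈ C^n` satisfy `‖x - x'‖_∞ ≤ τ`, then
`|μ(O₊(x)) - μ(O₊(x'))| ≤ (n+1)² · M · τ`. -/
theorem opos_value_lipschitz (n : ℕ) (M τ : ℝ) (hM : 0 < M) (hτ : 0 ≤ τ)
    (μ : Measure ℝ)
    (hbound : μ (Set.Icc (0 : ℝ) 1) ≤ ENNReal.ofReal M)
    (hdensity : ∀ s : Set ℝ, MeasurableSet s → μ s ≤ ENNReal.ofReal M * volume s)
    (x x' : Fin (n + 1) → ℝ) (hx : ∑ i, |x i| = 1) (hx' : ∑ i, |x' i| = 1)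
    (hclose : ∀ i, |x i - x' i| ≤ τ) :
    |(μ (Opos x)).toReal - (μ (Opos x')).toReal| ≤ ((n : ℝ) + 1) ^ 2 * M * τ := by
  have hC : (0:ℝ) ≤ ((n:ℝ)+1)^2 * M * τ := by positivity
  have hfin : ∀ y : Fin (n+1) → ℝ, (∑ i, |y i| = 1) → μ (Opos y) ≤ ENNReal.ofReal M := by
    intro y hy
    refine le_trans (measure_mono ?_) hbound
    apply Set.iUnion_subset
    intro k
    split
    · exact Set.Icc_subset_Icc (cutPt_nonneg y _) (cutPt_le_one y hy _)
    · exact Set.empty_subset _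
  have hne : ∀ y : Fin (n+1) → ℝ, (∑ i, |y i| = 1) → μ (Opos y) ≠ ⊤ :=
    fun y hy => ne_top_of_le_ne_top ENNReal.ofReal_ne_top (hfin y hy)
  have key : ∀ y y' : Fin (n+1) → ℝ, (∑ i, |y i| = 1) → (∑ i, |y' i| = 1) →
      (∀ i, |y i - y' i| ≤ τ) →
      (μ (Opos y)).toReal - (μ (Opos y')).toReal ≤ ((n:ℝ)+1)^2 * M * τ := by
    intro y y' hy hy' hcl
    have hd := mu_diff_le n M τ hM hτ μ hdensity y y' hcl
    have h1 : μ (Opos y) ≤ μ (Opos y') + ENNReal.ofReal (((n:ℝ)+1)^2 * M * τ) := by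
      calc μ (Opos y) ≤ μ (Opos y ∩ Opos y') + μ (Opos y \ Opos y') :=
            measure_le_inter_add_diff μ _ _
        _ ≤ μ (Opos y') + ENNReal.ofReal (((n:ℝ)+1)^2 * M * τ) :=
            add_le_add (measure_mono Set.inter_subset_right) hd
    have := ENNReal.toReal_mono (by
        exact ENNReal.add_ne_top.mpr ⟨hne y' hy', ENNReal.ofReal_ne_top⟩) h1
    rw [ENNReal.toReal_add (hne y' hy') ENNReal.ofReal_ne_top, ENNReal.toReal_ofReal hC] at this
    linarith
  have k1 := key x x' hx hx' hclose
  have k2 := key x' x hx' hx (fun i => by rw [abs_sub_comm]; exact hclose i)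
  rw [abs_sub_le_iff]
  exact ⟨k1, k2⟩
end

section
/- Under the setting of the Simmons–Su labeling: if z and z' are adjacent vertices of the triangulation T (mesh fine enough that |μ_i(O_+(z)) - μ_i(O_+(z'))| ≤ ε/2 and |μ_i(O_-(z)) - μ_i(O_-(z'))| ≤ ε/2 for all i), and z is labeled +k while z' is labeled -k (a complementary edge), then the partition corresponding to z is an ε-approximate consensus-halving: |μ_i(O_+(z)) - μ_i(O_-(z))| ≤ ε for all i = 1, ..., n. -/
open MeasureTheory

/-- The negative portion of the partition encoded by `x`. -/
noncomputable def Oneg {n : ℕ} (x : Fin (n + 1) → ℝ) : Set ℝ :=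
  ⋃ k : Fin (n + 1), if x k < 0 then Set.Icc (cutPt x (k : ℕ)) (cutPt x ((k : ℕ) + 1)) else ∅

/-- The (signed) discrepancy of the measure `μ` at the partition encoded by `x`. -/
noncomputable def disc {n : ℕ} (μ : Measure ℝ) (x : Fin (n + 1) → ℝ) : ℝ :=
  (μ (Opos x)).toReal - (μ (Oneg x)).toReal

/-- **A complementary edge yields an ε-approximate consensus halving.** If `z, z'` are
adjacent vertices (the mesh is fine enough that `|μᵢ(O₊(z)) - μᵢ(O₊(z'))| ≤ ε/2` and
`|μᵢ(O₋(z)) - μᵢ(O₋(z'))| ≤ ε/2` for all `i`), `z` is labeled `+k` (agent `k` has maximal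
discrepancy at `z`, and it is positive) and `z'` is labeled `-k` (the discrepancy of agent
`k` at `z'` is negative), then the partition encoded by `z` is an `ε`-approximate
consensus halving: `|μᵢ(O₊(z)) - μᵢ(O₋(z))| ≤ ε` for all `i`. -/
theorem complementary_edge_gives_solution (n : ℕ) (μ : Fin n → Measure ℝ)
    [∀ i, IsFiniteMeasure (μ i)]
    (ε : ℝ) (hε : 0 ≤ ε)
    (z z' : Fin (n + 1) → ℝ) (hz : ∑ i, |z i| = 1) (hz' : ∑ i, |z' i| = 1)
    (k : Fin n)
    (hmesh_pos : ∀ i, |(μ i (Opos z)).toReal - (μ i (Opos z')).toReal| ≤ ε / 2)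
    (hmesh_neg : ∀ i, |(μ i (Oneg z)).toReal - (μ i (Oneg z')).toReal| ≤ ε / 2)
    (hmax : ∀ i, |disc (μ i) z| ≤ |disc (μ k) z|)
    (hpos : 0 < disc (μ k) z)
    (hneg : disc (μ k) z' < 0) :
    ∀ i, |disc (μ i) z| ≤ ε := by
  intro i
  have h1 := hmesh_pos k
  have h2 := hmesh_neg k
  have hk : |disc (μ k) z| ≤ ε := by
    rw [abs_of_pos hpos]
    have : disc (μ k) z ≤ disc (μ k) z - disc (μ k) z' := by linarith
    unfold disc at *
    rw [abs_le] at h1 h2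
    linarith
  exact le_trans (hmax i) hk
end

section
/- For x, y ∈ [0,1], define via the generalized-circuit operations: a = max(x - y, 0), b = max(y - x, 0), c = min(a + b, 1), d = c/2, ℓ = x/2 + y/2 (computed as min of sum, which never clamps), m1 = max(ℓ - d, 0), m2 = min(ℓ + d, 1). Then m1 = min(x, y) and m2 = max(x, y). -/
/-- **Exact correctness of the min/max gadget** (Algorithm 2): for `x, y ∈ [0,1]`,
setting `a = max(x - y, 0)`, `b = max(y - x, 0)`, `c = min(a + b, 1)`, `d = c/2`,
`ℓ = x/2 + y/2`, `m₁ = max(ℓ - d, 0)` and `m₂ = min(ℓ + d, 1)`, one has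
`m₁ = min x y` and `m₂ = max x y`. -/
theorem minmax_gadget_correct (x y : ℝ)
    (hx : x ∈ Set.Icc (0 : ℝ) 1) (hy : y ∈ Set.Icc (0 : ℝ) 1)
    (a b c d l m1 m2 : ℝ)
    (ha : a = max (x - y) 0) (hb : b = max (y - x) 0)
    (hc : c = min (a + b) 1) (hd : d = c / 2)
    (hl : l = x / 2 + y / 2)
    (hm1 : m1 = max (l - d) 0) (hm2 : m2 = min (l + d) 1) :
    m1 = min x y ∧ m2 = max x y := by
  obtain ⟨hx0, hx1⟩ := hx
  obtain ⟨hy0, hy1⟩ := hy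
  subst ha hb hc hd hl hm1 hm2
  rcases le_total x y with h | h
  · rw [max_eq_right (sub_nonpos.mpr h), max_eq_left (sub_nonneg.mpr h),
      min_eq_left (by linarith), min_eq_left h, max_eq_right h]
    constructor
    · rw [max_eq_left (by linarith)]; ring
    · rw [min_eq_left (by linarith)]; ring
  · rw [max_eq_left (sub_nonneg.mpr h), max_eq_right (sub_nonpos.mpr h),
      min_eq_left (by linarith), min_eq_right h, max_eq_left h]
    constructor
    · rw [max_eq_left (by linarith)]; ring
    · rw [min_eq_left (by linarith)]; ring
end
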